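/- Let $a,c \geq 2$, $b \geq 1$ be integers with $ac - a - c \neq 0$. Consider $V = \mathbb{Q}^{a-1} \oplus \mathbb{Q}^{b+c}$ with the Mukai pairing, the anticanonical class $\kappa = c\sum H_i - ((a-1)(c-1)-1)\sum E_j$, and the $a+b+c-2$ simple roots $E_j - E_{j+1}$ ($1 \leq j \leq b+c-1$), $H_1 - E_1 - \cdots - E_c$, $H_i - H_{i+1}$ ($1 \leq i \leq a-2$). If additionally $\frac{1}{a}+\frac{1}{b}+\frac{1}{c} \neq 1$, then the simple roots together with $\kappa$ form a basis of $V$ (equivalently, they are linearly independent, since there are $a+b+c-1 = \dim V$ of them). -/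

import Mathlib

open Finset

/-- The Picard lattice (tensored with ℚ) of `X_{a,b,c}`: `n = a-1` copies of `H`
and `m = b+c` copies of `E`. -/
abbrev MukaiV (n m : ℕ) : Type := (Fin n → ℚ) × (Fin m → ℚ)

/-- The Mukai pairing: `(H_i,H_j) = (c-1) - δ_{ij}`, `(H_i,E_j) = 0`, `(E_i,E_j) = -δ_{ij}`,
extended bilinearly. -/
def mukai (c : ℕ) {n m : ℕ} (v w : MukaiV n m) : ℚ :=
  ((c : ℚ) - 1) * (∑ i, v.1 i) * (∑ i, w.1 i)
    - ∑ i, v.1 i * w.1 i - ∑ j, v.2 j * w.2 j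

/-- The class `H_i` (0-indexed). -/
def Hvec (n m : ℕ) (i : ℕ) : MukaiV n m :=
  (fun k => if (k : ℕ) = i then 1 else 0, 0)

/-- The class `E_j` (0-indexed). -/
def Evec (n m : ℕ) (j : ℕ) : MukaiV n m :=
  (0, fun k => if (k : ℕ) = j then 1 else 0)

/-- The anticanonical class `κ = c ∑ H_i - ((a-1)(c-1)-1) ∑ E_j`. -/
def kappa (a c n m : ℕ) : MukaiV n m :=
  (fun _ => (c : ℚ), fun _ => -(((a : ℚ) - 1) * ((c : ℚ) - 1) - 1))

/-- The `k`-th simple root (0-indexed, `0 ≤ k ≤ a+b+c-3`): first the `b+c-1` roots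
`E_j - E_{j+1}`, then `H_1 - E_1 - ⋯ - E_c`, then the `a-2` roots `H_i - H_{i+1}`. -/
def root (a b c : ℕ) (k : ℕ) : MukaiV (a-1) (b+c) :=
  if k < b + c - 1 then Evec (a-1) (b+c) k - Evec (a-1) (b+c) (k+1)
  else if k = b + c - 1 then
    Hvec (a-1) (b+c) 0 - ∑ j ∈ Finset.range c, Evec (a-1) (b+c) j
  else Hvec (a-1) (b+c) (k - (b+c)) - Hvec (a-1) (b+c) (k - (b+c) + 1)

/-- `κ` expressed as a combination of the `H_i` and `E_j`. -/
lemma kappa_eq (a c n m : ℕ) :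
    kappa a c n m = (c : ℚ) • (∑ i ∈ Finset.range n, Hvec n m i)
      - (((a : ℚ) - 1) * ((c : ℚ) - 1) - 1) • (∑ j ∈ Finset.range m, Evec n m j) := by
  ext k <;>
    simp [kappa, Hvec, Evec, Prod.fst_sum, Prod.snd_sum, Finset.sum_apply,
      Finset.sum_ite_eq, Fin.is_lt]

lemma sum_eq_card_smul_sub {M : Type*} [AddCommGroup M] [Module ℚ M]
    (N : ℕ) (v : ℕ → M) (x : M) :
    ∑ i ∈ Finset.range N, v i = (N : ℚ) • x - ∑ i ∈ Finset.range N, (x - v i) := by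
  rw [Finset.sum_sub_distrib, Finset.sum_const, Finset.card_range, Nat.cast_smul_eq_nsmul]
  abel

/-- Every vector is a combination of the `H_i` and `E_j`. -/
lemma mukai_repr (n m : ℕ) (x : MukaiV n m) :
    x = ∑ i : Fin n, x.1 i • Hvec n m i + ∑ j : Fin m, x.2 j • Evec n m j := by
  ext k <;>
    simp [Hvec, Evec, Prod.fst_sum, Prod.snd_sum, Finset.sum_apply, Fin.val_eq_val,
      Finset.sum_ite_eq, mul_ite]

/-- If `1/a + 1/b + 1/c ≠ 1` and `ac - a - c ≠ 0`, the `a+b+c-2` simple roots together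
with the anticanonical class `κ` form a basis of `ℚ^{a-1} ⊕ ℚ^{b+c}`. -/
theorem stmt8 (a b c : ℕ) (ha : 2 ≤ a) (hb : 1 ≤ b) (hc : 2 ≤ c)
    (h1 : 1 / (a : ℚ) + 1 / (b : ℚ) + 1 / (c : ℚ) ≠ 1)
    (h2 : (a : ℚ) * c - a - c ≠ 0) :
    LinearIndependent ℚ (fun k : Fin (a + b + c - 1) =>
      if (k : ℕ) < a + b + c - 2 then root a b c k else kappa a c (a-1) (b+c)) ∧
    Submodule.span ℚ (Set.range (fun k : Fin (a + b + c - 1) =>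
      if (k : ℕ) < a + b + c - 2 then root a b c k else kappa a c (a-1) (b+c))) = ⊤ := by
  set f : Fin (a + b + c - 1) → MukaiV (a-1) (b+c) := fun k =>
    if (k : ℕ) < a + b + c - 2 then root a b c k else kappa a c (a-1) (b+c) with hf
  set S := Submodule.span ℚ (Set.range f) with hS
  set H0 := Hvec (a-1) (b+c) 0 with hH0def
  set E0 := Evec (a-1) (b+c) 0 with hE0def
  -- the roots and κ lie in S
  have hroot : ∀ k : ℕ, k < a + b + c - 2 → root a b c k ∈ S := by
    intro k hk
    have : root a b c k = f ⟨k, by omega⟩ := by simp [hf, hk]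
    rw [this]; exact Submodule.subset_span (Set.mem_range_self _)
  have hκ : kappa a c (a-1) (b+c) ∈ S := by
    have : kappa a c (a-1) (b+c) = f ⟨a + b + c - 2, by omega⟩ := by simp [hf]
    rw [this]; exact Submodule.subset_span (Set.mem_range_self _)
  -- differences of E's
  have hEd : ∀ j : ℕ, j < b + c → E0 - Evec (a-1) (b+c) j ∈ S := by
    intro j hj
    induction j with
    | zero => rw [hE0def]; simpa using S.zero_mem
    | succ j ih =>
      have hr : root a b c j = Evec (a-1) (b+c) j - Evec (a-1) (b+c) (j+1) := by
        have : j < b + c - 1 := by omega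
        simp [root, this]
      have hmem : Evec (a-1) (b+c) j - Evec (a-1) (b+c) (j+1) ∈ S := by
        rw [← hr]; exact hroot j (by omega)
      have := S.add_mem (ih (by omega)) hmem
      rwa [sub_add_sub_cancel] at this
  -- differences of H's
  have hHd : ∀ i : ℕ, i < a - 1 → H0 - Hvec (a-1) (b+c) i ∈ S := by
    intro i hi
    induction i with
    | zero => rw [hH0def]; simpa using S.zero_mem
    | succ i ih =>
      have hr : root a b c (b + c + i)
          = Hvec (a-1) (b+c) i - Hvec (a-1) (b+c) (i+1) := by
        have e1 : ¬ (b + c + i < b + c - 1) := by omega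
        have e2 : b + c + i ≠ b + c - 1 := by omega
        have e3 : b + c + i - (b + c) = i := by omega
        simp [root, e1, e2, e3]
      have hmem : Hvec (a-1) (b+c) i - Hvec (a-1) (b+c) (i+1) ∈ S := by
        rw [← hr]; exact hroot _ (by omega)
      have := S.add_mem (ih (by omega)) hmem
      rwa [sub_add_sub_cancel] at this
  -- the special root H_1 - E_1 - ⋯ - E_c
  have hRmem : H0 - ∑ j ∈ Finset.range c, Evec (a-1) (b+c) j ∈ S := by
    have hr : root a b c (b + c - 1)
        = H0 - ∑ j ∈ Finset.range c, Evec (a-1) (b+c) j := by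
      simp [root, hH0def]
    rw [← hr]; exact hroot _ (by omega)
  -- sums of differences are in S
  have hsumH : (∑ i ∈ Finset.range (a-1), (H0 - Hvec (a-1) (b+c) i)) ∈ S :=
    Submodule.sum_mem _ fun i hi => hHd i (Finset.mem_range.mp hi)
  have hsumE : (∑ j ∈ Finset.range (b+c), (E0 - Evec (a-1) (b+c) j)) ∈ S :=
    Submodule.sum_mem _ fun j hj => hEd j (Finset.mem_range.mp hj)
  have hsumEc : (∑ j ∈ Finset.range c, (E0 - Evec (a-1) (b+c) j)) ∈ S :=
    Submodule.sum_mem _ fun j hj => hEd j (by have := Finset.mem_range.mp hj; omega)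
  set Mq : ℚ := ((a : ℚ) - 1) * ((c : ℚ) - 1) - 1 with hMq
  set Nq : ℚ := ((a - 1 : ℕ) : ℚ) with hNq
  set mq : ℚ := ((b + c : ℕ) : ℚ) with hmq
  -- κ rewritten via the differences
  have hKrw : kappa a c (a-1) (b+c)
      = (c : ℚ) • (Nq • H0 - ∑ i ∈ Finset.range (a-1), (H0 - Hvec (a-1) (b+c) i))
        - Mq • (mq • E0 - ∑ j ∈ Finset.range (b+c), (E0 - Evec (a-1) (b+c) j)) := by
    rw [kappa_eq a c (a-1) (b+c),
      sum_eq_card_smul_sub (a-1) (Hvec (a-1) (b+c)) H0,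
      sum_eq_card_smul_sub (b+c) (Evec (a-1) (b+c)) E0]
  have hA : (c : ℚ) • (Nq • H0) - Mq • (mq • E0) ∈ S := by
    have heq : (c : ℚ) • (Nq • H0) - Mq • (mq • E0)
        = kappa a c (a-1) (b+c)
          + (c : ℚ) • (∑ i ∈ Finset.range (a-1), (H0 - Hvec (a-1) (b+c) i))
          - Mq • (∑ j ∈ Finset.range (b+c), (E0 - Evec (a-1) (b+c) j)) := by
      rw [hKrw]; module
    rw [heq]
    exact S.sub_mem (S.add_mem hκ (S.smul_mem _ hsumH)) (S.smul_mem _ hsumE)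
  -- H0 expressed via E0
  have hH0eq : H0 = (H0 - ∑ j ∈ Finset.range c, Evec (a-1) (b+c) j)
      + ((c : ℚ) • E0 - ∑ j ∈ Finset.range c, (E0 - Evec (a-1) (b+c) j)) := by
    rw [← sum_eq_card_smul_sub c (Evec (a-1) (b+c)) E0]
    abel
  set q : ℚ := (c : ℚ) * (c : ℚ) * Nq - Mq * mq with hq_def
  have hqE : q • E0 ∈ S := by
    have key : q • E0
        = ((c : ℚ) • (Nq • H0) - Mq • (mq • E0))
          - ((c : ℚ) * Nq) • (H0 - ∑ j ∈ Finset.range c, Evec (a-1) (b+c) j)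
          + ((c : ℚ) * Nq) • (∑ j ∈ Finset.range c, (E0 - Evec (a-1) (b+c) j)) := by
      rw [hq_def]
      nth_rewrite 1 [hH0eq]
      module
    rw [key]
    exact S.add_mem (S.sub_mem hA (S.smul_mem _ hRmem)) (S.smul_mem _ hsumEc)
  -- the coefficient is nonzero
  have ha0 : (a : ℚ) ≠ 0 := Nat.cast_ne_zero.mpr (by omega)
  have hb0 : (b : ℚ) ≠ 0 := Nat.cast_ne_zero.mpr (by omega)
  have hc0 : (c : ℚ) ≠ 0 := Nat.cast_ne_zero.mpr (by omega)
  have hq : q ≠ 0 := by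
    have hfactor : q = (a : ℚ) * b * c * (1 / (a : ℚ) + 1 / (b : ℚ) + 1 / (c : ℚ) - 1) := by
      rw [hq_def, hNq, hmq, hMq]
      push_cast [Nat.cast_sub (show 1 ≤ a by omega)]
      field_simp
      ring
    rw [hfactor]
    exact mul_ne_zero (mul_ne_zero (mul_ne_zero ha0 hb0) hc0) (sub_ne_zero.mpr h1)
  have hE0 : E0 ∈ S := by
    have := S.smul_mem q⁻¹ hqE
    rwa [inv_smul_smul₀ hq] at this
  -- all basis vectors are in S
  have hE : ∀ j : ℕ, j < b + c → Evec (a-1) (b+c) j ∈ S := by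
    intro j hj
    have := S.sub_mem hE0 (hEd j hj)
    rwa [sub_sub_cancel] at this
  have hH0mem : H0 ∈ S := by
    rw [hH0eq]
    refine S.add_mem hRmem (S.sub_mem (S.smul_mem _ hE0) hsumEc)
  have hH : ∀ i : ℕ, i < a - 1 → Hvec (a-1) (b+c) i ∈ S := by
    intro i hi
    have := S.sub_mem hH0mem (hHd i hi)
    rwa [sub_sub_cancel] at this
  -- spanning
  have hspan : S = ⊤ := by
    rw [eq_top_iff]
    rintro x -
    rw [mukai_repr (a-1) (b+c) x]
    exact S.add_mem
      (Submodule.sum_mem _ fun i _ => S.smul_mem _ (hH i i.isLt))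
      (Submodule.sum_mem _ fun j _ => S.smul_mem _ (hE j j.isLt))
  refine ⟨?_, hspan⟩
  apply linearIndependent_of_top_le_span_of_card_eq_finrank hspan.ge
  rw [Fintype.card_fin, Module.finrank_prod, Module.finrank_fin_fun, Module.finrank_fin_fun]
  omega
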